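/- Fix an integer d ≥ 2 and constants c > 0, C ≥ 1. There exist K ≥ 1 and ε_0 > 0 such that for every ε ∈ (0,ε_0) there exists δ_0 > 0 with the following property for all δ ∈ (0,δ_0). Let y_1,…,y_d ∈ B(0,1) ⊆ ℝ^d be points in c-general position, and let E ⊆ B(0,10) be a measurable set such that for every ρ ∈ [δ,1] and every ρ-tube T one has vol(E ∩ T) ≤ C·δ^{(d−ε)/2}·ρ^{(d−1)/2}. Then vol({ x ∈ E : there exists r > 0 with ||x − y_j| − r| ≤ δ^{1−ε} for every 1 ≤ j ≤ d }) ≤ δ^{(2d−1)/2 − Kε}. -/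

import Mathlib

open MeasureTheory Metric Set
open scoped ENNReal

noncomputable section

abbrev Euc (d : ℕ) : Type := EuclideanSpace ℝ (Fin d)

/-- The line through `a` with direction `v`. -/
def lineThrough {d : ℕ} (a v : Euc d) : Set (Euc d) :=
  Set.range fun t : ℝ => a + t • v

/-- The `ρ`-tube around the line through `a` with direction `v`: the closed
`ρ`-neighbourhood of the line. -/
def Tube {d : ℕ} (ρ : ℝ) (a v : Euc d) : Set (Euc d) :=
  {x | infDist x (lineThrough a v) ≤ ρ}

/-- The `m`-dimensional volume `|v 1 ∧ ⋯ ∧ v m|` of the parallelepiped spanned by the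
vectors `v i`, computed as the square root of the Gram determinant. -/
def parVol {d m : ℕ} (v : Fin m → Euc d) : ℝ :=
  Real.sqrt (Matrix.det (Matrix.of fun i j : Fin m => (inner ℝ (v i) (v j) : ℝ)))

/-- The difference vectors `y_{i+1} - y_1` of a `d`-tuple of points in `ℝ^d`. -/
def dvec {d : ℕ} (y : Fin d → Euc d) (i : Fin (d - 1)) : Euc d :=
  y ⟨i.val + 1, by have := i.isLt; omega⟩ - y ⟨0, by have := i.isLt; omega⟩

/-- `y_1, …, y_d ∈ ℝ^d` are in `c`-general position:
`|(y_2-y_1) ∧ ⋯ ∧ (y_d-y_1)| ≥ c`. -/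
def GenPos {d : ℕ} (c : ℝ) (y : Fin d → Euc d) : Prop :=
  c ≤ parVol (dvec y)

def Dc (m : ℕ) (c : ℝ) : ℝ := (m : ℝ) * Real.sqrt (m.factorial * 4 ^ m) / c

lemma det_ge {d m : ℕ} (c : ℝ) (hc : 0 < c) (v : Fin m → Euc d) (hdet : c ≤ parVol v) :
    c ^ 2 ≤ (Matrix.of fun i j : Fin m => (inner ℝ (v i) (v j) : ℝ)).det := by
  set G : Matrix (Fin m) (Fin m) ℝ := Matrix.of fun i j : Fin m => (inner ℝ (v i) (v j) : ℝ) with hG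
  have h0 : (0:ℝ) ≤ G.det := by
    by_contra h
    push_neg at h
    have : parVol v = 0 := by
      unfold parVol
      exact Real.sqrt_eq_zero_of_nonpos h.le
    nlinarith [hdet, hc]
  calc c ^ 2 = c * c := sq c
  _ ≤ parVol v * parVol v := mul_le_mul hdet hdet hc.le (le_trans hc.le hdet)
  _ = G.det := by
      unfold parVol
      rw [← hG, Real.mul_self_sqrt h0]

lemma indep {d m : ℕ} (c : ℝ) (hc : 0 < c) (v : Fin m → Euc d) (hdet : c ≤ parVol v) :
    LinearIndependent ℝ v := by
  classical
  by_contra h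
  obtain ⟨g, hg, i, hi⟩ := Fintype.not_linearIndependent_iff.1 h
  set G : Matrix (Fin m) (Fin m) ℝ := Matrix.of fun i j : Fin m => (inner ℝ (v i) (v j) : ℝ) with hG
  have hmv : G.mulVec g = 0 := by
    funext k
    have : (inner ℝ (v k) (∑ i, g i • v i) : ℝ) = 0 := by rw [hg, inner_zero_right]
    simp only [inner_sum, real_inner_smul_right] at this
    simpa [Matrix.mulVec, dotProduct, hG, mul_comm] using this
  have hdet0 : G.det = 0 := by
    rw [← Matrix.exists_mulVec_eq_zero_iff]
    exact ⟨g, by intro hgg; exact hi (congrFun hgg i), hmv⟩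
  have := det_ge c hc v hdet
  rw [← hG] at this
  nlinarith [this, hc]

lemma inner_window {d : ℕ} (y : Fin d → Euc d) (hy : ∀ j, ‖y j‖ ≤ 1)
    (w : ℝ) (hw0 : 0 < w) (x : Euc d) (hx : ‖x‖ ≤ 10)
    (r : ℝ) (hr : ∀ j, |dist x (y j) - r| ≤ w) (i : Fin (d - 1)) :
    |(inner ℝ x (dvec y i) : ℝ) -
      ((‖y ⟨i.val + 1, by have := i.isLt; omega⟩‖ ^ 2 - ‖y ⟨0, by have := i.isLt; omega⟩‖ ^ 2) / 2)|
      ≤ 26 * w := by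
  set j1 : Fin d := ⟨i.val + 1, by have := i.isLt; omega⟩
  set j0 : Fin d := ⟨0, by have := i.isLt; omega⟩
  set a := dist x (y j1) with ha
  set b := dist x (y j0) with hb
  have hab : |a - b| ≤ 2 * w := by
    have h1 := hr j1
    have h2 := hr j0
    rw [← ha] at h1; rw [← hb] at h2
    rw [abs_le] at *
    constructor <;> nlinarith [h1.1, h1.2, h2.1, h2.2]
  have han : a ≤ 11 := by
    calc a ≤ ‖x‖ + ‖y j1‖ := by rw [ha, dist_eq_norm]; exact norm_sub_le _ _
    _ ≤ 11 := by linarith [hy j1]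
  have hbn : b ≤ 11 := by
    calc b ≤ ‖x‖ + ‖y j0‖ := by rw [hb, dist_eq_norm]; exact norm_sub_le _ _
    _ ≤ 11 := by linarith [hy j0]
  have ha0 : 0 ≤ a := dist_nonneg
  have hb0 : 0 ≤ b := dist_nonneg
  have hsq : |a ^ 2 - b ^ 2| ≤ 44 * w := by
    have : a ^ 2 - b ^ 2 = (a - b) * (a + b) := by ring
    rw [this, abs_mul]
    have h2 : |a + b| ≤ 22 := by rw [abs_of_nonneg (by linarith)]; linarith
    calc |a - b| * |a + b| ≤ (2 * w) * 22 :=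
      mul_le_mul hab h2 (abs_nonneg _) (by linarith)
    _ = 44 * w := by ring
  have hexp : a ^ 2 - b ^ 2 = -2 * (inner ℝ x (dvec y i) : ℝ) + ‖y j1‖ ^ 2 - ‖y j0‖ ^ 2 := by
    rw [ha, hb, dist_eq_norm, dist_eq_norm, norm_sub_sq_real, norm_sub_sq_real]
    have : dvec y i = y j1 - y j0 := rfl
    rw [this, inner_sub_right]
    ring
  rw [abs_le] at hsq ⊢
  constructor <;> [nlinarith [hsq.1, hsq.2, hw0]; nlinarith [hsq.1, hsq.2, hw0]]

lemma lemA {d m : ℕ} (c : ℝ) (hc : 0 < c) (v : Fin m → Euc d)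
    (hdet : c ≤ parVol v) (hv : ∀ i, ‖v i‖ ≤ 2)
    (p : Euc d) (hp : p ∈ Submodule.span ℝ (Set.range v))
    (s : ℝ) (hs : 0 ≤ s) (hps : ∀ i, |(inner ℝ p (v i) : ℝ)| ≤ s) :
    ‖p‖ ≤ Dc m c * s := by
  classical
  set G : Matrix (Fin m) (Fin m) ℝ := Matrix.of fun i j : Fin m => (inner ℝ (v i) (v j) : ℝ) with hG
  have hdet2 : c ^ 2 ≤ G.det := by
    have h0 : (0:ℝ) ≤ G.det := by
      by_contra h
      push_neg at h
      have : parVol v = 0 := by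
        unfold parVol
        exact Real.sqrt_eq_zero_of_nonpos h.le
      nlinarith [hdet, hc]
    calc c ^ 2 = c * c := sq c
    _ ≤ parVol v * parVol v := by
        apply mul_le_mul hdet hdet hc.le (le_trans hc.le hdet)
    _ = G.det := by
        unfold parVol
        rw [← hG, Real.mul_self_sqrt h0]
  have hdetpos : 0 < G.det := lt_of_lt_of_le (by positivity) hdet2
  obtain ⟨α, hα⟩ := (Submodule.mem_span_range_iff_exists_fun ℝ).1 hp
  set β : Fin m → ℝ := fun i => (inner ℝ (v i) p : ℝ) with hβdef
  have hβ : G.mulVec α = β := by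
    funext i
    simp only [Matrix.mulVec, dotProduct, hβdef, hG, Matrix.of_apply, ← hα,
      inner_sum, real_inner_smul_right]
    exact Finset.sum_congr rfl fun j _ => mul_comm _ _
  have hGentry : ∀ i j, |G i j| ≤ 4 := by
    intro i j
    calc |G i j| ≤ ‖v i‖ * ‖v j‖ := abs_real_inner_le_norm (v i) (v j)
    _ ≤ 4 := by nlinarith [hv i, hv j, norm_nonneg (v i), norm_nonneg (v j)]
  have hadj_entry : ∀ i j, |G.adjugate i j| ≤ m.factorial * 4 ^ m := by
    intro i j
    rw [Matrix.adjugate_apply]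
    have hb : ∀ i' j', |(G.updateRow j (Pi.single i 1)) i' j'| ≤ 4 := by
      intro i' j'
      rcases eq_or_ne i' j with rfl | h
      · rw [Matrix.updateRow_self]
        rcases eq_or_ne j' i with rfl | h2
        · simp
        · simp [Pi.single_apply, Ne.symm h2]
      · rw [Matrix.updateRow_ne h]; exact hGentry _ _
    have hb' : ∀ i' j', AbsoluteValue.abs ((G.updateRow j (Pi.single i 1)) i' j') ≤ (4:ℝ) := by
      simpa [AbsoluteValue.abs_apply] using hb
    have := Matrix.det_le hb'
    simpa [AbsoluteValue.abs_apply, Fintype.card_fin, nsmul_eq_mul] using this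
  have hαeq : G.det • α = (G.adjugate).mulVec β := by
    rw [← hβ, Matrix.mulVec_mulVec, Matrix.adjugate_mul, Matrix.smul_mulVec,
      Matrix.one_mulVec]
  have hβbound : ∀ i, |β i| ≤ s := by
    intro i
    show |(inner ℝ (v i) p : ℝ)| ≤ s
    rw [real_inner_comm]
    exact hps i
  have hα_bound : ∀ i, |α i| ≤ (m : ℝ) * ((m.factorial * 4 ^ m) * s) / c ^ 2 := by
    intro i
    have h1 : G.det * α i = ((G.adjugate).mulVec β) i := by
      have := congrFun hαeq i
      simpa [smul_eq_mul] using this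
    have h2 : |((G.adjugate).mulVec β) i| ≤ (m : ℝ) * ((m.factorial * 4 ^ m) * s) := by
      simp only [Matrix.mulVec, dotProduct]
      calc |∑ j, G.adjugate i j * β j| ≤ ∑ j, |G.adjugate i j * β j| :=
            Finset.abs_sum_le_sum_abs _ _
      _ ≤ ∑ _j : Fin m, (m.factorial * 4 ^ m) * s := Finset.sum_le_sum fun j _ => by
            rw [abs_mul]
            exact mul_le_mul (hadj_entry i j) (hβbound j) (abs_nonneg _) (by positivity)
      _ = (m : ℝ) * ((m.factorial * 4 ^ m) * s) := by
            simp [Finset.sum_const, Fintype.card_fin, nsmul_eq_mul]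
    calc |α i| = |G.det * α i| / G.det := by
          rw [abs_mul, abs_of_pos hdetpos]; field_simp
    _ ≤ ((m : ℝ) * ((m.factorial * 4 ^ m) * s)) / G.det := by
          gcongr
          rw [h1]; exact h2
    _ ≤ (m : ℝ) * ((m.factorial * 4 ^ m) * s) / c ^ 2 := by
          apply div_le_div_of_nonneg_left (by positivity) (by positivity) hdet2
  have hnorm2 : ‖p‖ ^ 2 ≤ (m : ℝ) * (((m : ℝ) * ((m.factorial * 4 ^ m) * s) / c ^ 2) * s) := by
    have he : ‖p‖ ^ 2 = ∑ i, α i * β i := by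
      have h := congrArg (fun z : Euc d => (inner ℝ z p : ℝ)) hα
      simp only [sum_inner, real_inner_smul_left] at h
      rw [← real_inner_self_eq_norm_sq, ← h]
    rw [he]
    calc ∑ i, α i * β i ≤ |∑ i, α i * β i| := le_abs_self _
    _ ≤ ∑ i, |α i * β i| := Finset.abs_sum_le_sum_abs _ _
    _ ≤ ∑ _i : Fin m, ((m : ℝ) * ((m.factorial * 4 ^ m) * s) / c ^ 2) * s :=
        Finset.sum_le_sum fun i _ => by
          rw [abs_mul]
          exact mul_le_mul (hα_bound i) (hβbound i) (abs_nonneg _) (by positivity)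
    _ = (m : ℝ) * (((m : ℝ) * ((m.factorial * 4 ^ m) * s) / c ^ 2) * s) := by
          simp [Finset.sum_const, Fintype.card_fin, nsmul_eq_mul]
  have hDnn : 0 ≤ Dc m c * s := by
    unfold Dc
    positivity
  have hsq : ‖p‖ ^ 2 ≤ (Dc m c * s) ^ 2 := by
    refine hnorm2.trans (le_of_eq ?_)
    unfold Dc
    rw [mul_pow, div_pow, mul_pow, Real.sq_sqrt (by positivity)]
    field_simp
  have := Real.sqrt_le_sqrt hsq
  rwa [Real.sqrt_sq (norm_nonneg p), Real.sqrt_sq hDnn] at this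

lemma geo {d : ℕ} (hd : 2 ≤ d) (c : ℝ) (hc : 0 < c) (y : Fin d → Euc d)
    (hy : ∀ j, ‖y j‖ ≤ 1) (hgp : GenPos c y)
    (w : ℝ) (hw0 : 0 < w) :
    ∃ a u : Euc d, u ≠ 0 ∧
      ∀ x : Euc d, ‖x‖ ≤ 10 → (∃ r : ℝ, 0 < r ∧ ∀ j, |dist x (y j) - r| ≤ w) →
        x ∈ Tube (52 * Dc (d - 1) c * w) a u := by
  classical
  by_cases hS : ∃ x₀ : Euc d, ‖x₀‖ ≤ 10 ∧ ∃ r : ℝ, 0 < r ∧ ∀ j, |dist x₀ (y j) - r| ≤ w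
  swap
  · refine ⟨0, EuclideanSpace.single ⟨0, by omega⟩ 1, ?_, ?_⟩
    · intro h
      have : ‖EuclideanSpace.single (⟨0, by omega⟩ : Fin d) (1:ℝ)‖ = 1 := by
        rw [EuclideanSpace.norm_single]; norm_num
      rw [h] at this
      simp at this
    · intro x hx hr
      exact absurd ⟨x, hx, hr⟩ hS
  obtain ⟨x₀, hx₀n, hx₀r⟩ := hS
  set v : Fin (d - 1) → Euc d := dvec y with hv
  have hvnorm : ∀ i, ‖v i‖ ≤ 2 := by
    intro i
    have : v i = y ⟨i.val + 1, by have := i.isLt; omega⟩ - y ⟨0, by have := i.isLt; omega⟩ := rfl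
    rw [this]
    calc ‖_ - _‖ ≤ ‖y ⟨i.val + 1, by have := i.isLt; omega⟩‖ + ‖y ⟨0, by have := i.isLt; omega⟩‖ :=
          norm_sub_le _ _
    _ ≤ 2 := by linarith [hy ⟨i.val + 1, by have := i.isLt; omega⟩, hy ⟨0, by have := i.isLt; omega⟩]
  have hind : LinearIndependent ℝ v := indep c hc v hgp
  set V : Submodule ℝ (Euc d) := Submodule.span ℝ (Set.range v) with hV
  have hfrV : Module.finrank ℝ V = d - 1 := by
    rw [hV, finrank_span_eq_card hind, Fintype.card_fin]
  have hVne : V ≠ ⊤ := by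
    intro h
    have h2 := finrank_euclideanSpace_fin (𝕜 := ℝ) (n := d)
    rw [h, finrank_top] at hfrV
    rw [h2] at hfrV
    omega
  have hOrth : Vᗮ ≠ ⊥ := fun h => hVne (Submodule.orthogonal_eq_bot_iff.1 h)
  obtain ⟨u, huV, hu0⟩ := Submodule.exists_mem_ne_zero_of_ne_bot hOrth
  refine ⟨x₀, u, hu0, ?_⟩
  intro x hxn hxr
  obtain ⟨r, hrpos, hr⟩ := hxr
  obtain ⟨r₀, hr₀pos, hr₀⟩ := hx₀r
  -- inner ℝ product bounds
  have hkey : ∀ i, |(inner ℝ (x - x₀) (v i) : ℝ)| ≤ 52 * w := by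
    intro i
    have h1 := inner_window y hy w hw0 x hxn r hr i
    have h2 := inner_window y hy w hw0 x₀ hx₀n r₀ hr₀ i
    rw [inner_sub_left]
    set A := (inner ℝ x (v i) : ℝ)
    set B := (inner ℝ x₀ (v i) : ℝ)
    rw [abs_le] at h1 h2 ⊢
    constructor <;> nlinarith [h1.1, h1.2, h2.1, h2.2]
  -- decompose p
  set p : Euc d := x - x₀ with hp
  set pV : Euc d := (V.orthogonalProjectionOnto p : Euc d) with hpV
  have hq : p - pV ∈ Vᗮ := Submodule.sub_starProjection_mem_orthogonal p
  -- Vᗮ = span {u}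
  have hspan : Vᗮ = Submodule.span ℝ {u} := by
    have hle : Submodule.span ℝ {u} ≤ Vᗮ := by
      rw [Submodule.span_singleton_le_iff_mem]; exact huV
    have hfr1 : Module.finrank ℝ (Submodule.span ℝ {u}) = 1 := finrank_span_singleton hu0
    have hfrO : Module.finrank ℝ Vᗮ = 1 := by
      have := Submodule.finrank_add_finrank_orthogonal V
      rw [hfrV, finrank_euclideanSpace_fin] at this
      omega
    exact (Submodule.eq_of_le_of_finrank_le hle (by omega)).symm
  have hqs : p - pV ∈ Submodule.span ℝ {u} := hspan ▸ hq
  obtain ⟨t, ht⟩ := Submodule.mem_span_singleton.1 hqs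
  -- bound pV
  have hpVbound : ‖pV‖ ≤ Dc (d - 1) c * (52 * w) := by
    refine lemA c hc v hgp hvnorm pV (V.orthogonalProjectionOnto p).2 (52 * w)
      (by positivity) ?_
    intro i
    have hvi : v i ∈ V := Submodule.subset_span (Set.mem_range_self i)
    have horth : (inner ℝ (v i) (p - pV) : ℝ) = 0 := hq (v i) hvi
    have : (inner ℝ pV (v i) : ℝ) = (inner ℝ p (v i) : ℝ) := by
      have := real_inner_comm (v i) (p - pV)
      rw [horth] at this
      rw [inner_sub_left] at this
      linarith
    rw [this]
    exact hkey i
  -- conclude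
  show infDist x (lineThrough x₀ u) ≤ 52 * Dc (d - 1) c * w
  have hmem : x₀ + t • u ∈ lineThrough x₀ u := ⟨t, rfl⟩
  calc infDist x (lineThrough x₀ u) ≤ dist x (x₀ + t • u) := infDist_le_dist_of_mem hmem
  _ = ‖pV‖ := by
      rw [dist_eq_norm]
      congr 1
      rw [ht, hp]
      abel
  _ ≤ 52 * Dc (d - 1) c * w := by linarith [hpVbound]

lemma arith_core (d : ℕ) (hd : 2 ≤ d) (C M₁ : ℝ) (hC : 1 ≤ C) (hM : 1 ≤ M₁)
    (ε : ℝ) (hε : 0 < ε) (hε2 : ε < 1/2)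
    (δ : ℝ) (hδ : 0 < δ) (hδ1 : δ ≤ 1)
    (hδ2 : δ ≤ ((C * M₁ ^ (((d:ℝ)-1)/2))⁻¹) ^ (2 / ((d:ℝ) * ε))) :
    C * δ ^ (((d : ℝ) - ε) / 2) * (M₁ * δ ^ (1 - ε)) ^ (((d : ℝ) - 1) / 2)
      ≤ δ ^ ((2 * (d : ℝ) - 1) / 2 - (d : ℝ) * ε) := by
  set q : ℝ := ((d:ℝ) - 1)/2 with hqdef
  have hq0 : 0 ≤ q := by
    have : (2:ℝ) ≤ (d:ℝ) := by exact_mod_cast hd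
    rw [hqdef]; linarith
  set X : ℝ := C * M₁ ^ q with hX
  have hXpos : 0 < X := by
    have : (0:ℝ) < M₁ ^ q := Real.rpow_pos_of_pos (by linarith) q
    rw [hX]; nlinarith
  have hdε : (0:ℝ) < (d:ℝ) * ε := by
    have : (2:ℝ) ≤ (d:ℝ) := by exact_mod_cast hd
    nlinarith
  have hfac : X * δ ^ ((d:ℝ) * ε / 2) ≤ 1 := by
    have h1 : δ ^ ((d:ℝ) * ε / 2) ≤ (X⁻¹ ^ (2 / ((d:ℝ) * ε))) ^ ((d:ℝ) * ε / 2) :=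
      Real.rpow_le_rpow hδ.le hδ2 (by positivity)
    have h2 : (X⁻¹ ^ (2 / ((d:ℝ) * ε))) ^ ((d:ℝ) * ε / 2) = X⁻¹ := by
      rw [← Real.rpow_mul (by positivity)]
      rw [show 2 / ((d:ℝ) * ε) * ((d:ℝ) * ε / 2) = 1 by field_simp]
      exact Real.rpow_one _
    rw [h2] at h1
    calc X * δ ^ ((d:ℝ) * ε / 2) ≤ X * X⁻¹ := by
          apply mul_le_mul_of_nonneg_left h1 hXpos.le
    _ = 1 := mul_inv_cancel₀ hXpos.ne'
  have hw0 : (0:ℝ) < δ ^ (1 - ε) := Real.rpow_pos_of_pos hδ _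
  have expand : C * δ ^ (((d : ℝ) - ε) / 2) * (M₁ * δ ^ (1 - ε)) ^ q
      = δ ^ ((2 * (d : ℝ) - 1) / 2 - (d : ℝ) * ε) * (X * δ ^ ((d:ℝ) * ε / 2)) := by
    rw [Real.mul_rpow (by linarith) hw0.le, ← Real.rpow_mul hδ.le]
    have e1 : C * δ ^ (((d:ℝ) - ε) / 2) * (M₁ ^ q * δ ^ ((1 - ε) * q))
        = X * δ ^ (((d:ℝ) - ε) / 2 + (1 - ε) * q) := by
      rw [Real.rpow_add hδ]; rw [hX]; ring
    have e2 : δ ^ ((2 * (d : ℝ) - 1) / 2 - (d : ℝ) * ε) * (X * δ ^ ((d:ℝ) * ε / 2))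
        = X * δ ^ ((2 * (d : ℝ) - 1) / 2 - (d : ℝ) * ε + (d:ℝ) * ε / 2) := by
      rw [Real.rpow_add hδ]; ring
    rw [e1, e2]
    congr 1
    rw [hqdef]; ring
  calc C * δ ^ (((d : ℝ) - ε) / 2) * (M₁ * δ ^ (1 - ε)) ^ q
      = δ ^ ((2 * (d : ℝ) - 1) / 2 - (d : ℝ) * ε) * (X * δ ^ ((d:ℝ) * ε / 2)) := expand
  _ ≤ δ ^ ((2 * (d : ℝ) - 1) / 2 - (d : ℝ) * ε) * 1 := by
      apply mul_le_mul_of_nonneg_left hfac (Real.rpow_nonneg hδ.le _)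
  _ = δ ^ ((2 * (d : ℝ) - 1) / 2 - (d : ℝ) * ε) := mul_one _


theorem nondegeneracy_of_lines_i (d : ℕ) (hd : 2 ≤ d) (c C : ℝ) (hc : 0 < c) (hC : 1 ≤ C) :
    ∃ K : ℝ, 1 ≤ K ∧ ∃ ε₀ : ℝ, 0 < ε₀ ∧ ∀ ε : ℝ, 0 < ε → ε < ε₀ →
      ∃ δ₀ : ℝ, 0 < δ₀ ∧ ∀ δ : ℝ, 0 < δ → δ < δ₀ →
      ∀ (y : Fin d → Euc d) (E : Set (Euc d)),
        (∀ j, y j ∈ closedBall (0 : Euc d) 1) →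
        GenPos c y →
        E ⊆ closedBall (0 : Euc d) 10 →
        MeasurableSet E →
        (∀ ρ : ℝ, δ ≤ ρ → ρ ≤ 1 → ∀ a v : Euc d, v ≠ 0 →
          volume (E ∩ Tube ρ a v)
            ≤ ENNReal.ofReal (C * δ ^ (((d : ℝ) - ε) / 2) * ρ ^ (((d : ℝ) - 1) / 2))) →
        volume {x ∈ E | ∃ r : ℝ, 0 < r ∧ ∀ j, |dist x (y j) - r| ≤ δ ^ (1 - ε)}
          ≤ ENNReal.ofReal (δ ^ ((2 * (d : ℝ) - 1) / 2 - K * ε)) := by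
  have hd2 : (2:ℝ) ≤ (d:ℝ) := by exact_mod_cast hd
  refine ⟨(d:ℝ), by linarith, 1/2, by norm_num, ?_⟩
  intro ε hε hε2
  set M₁ : ℝ := max 1 (52 * Dc (d-1) c) with hM₁
  have hM1 : (1:ℝ) ≤ M₁ := le_max_left _ _
  have hM1pos : (0:ℝ) < M₁ := by linarith
  set q : ℝ := ((d:ℝ) - 1)/2 with hqdef
  set X : ℝ := C * M₁ ^ q with hX
  have hXpos : 0 < X := by
    have : (0:ℝ) < M₁ ^ q := Real.rpow_pos_of_pos hM1pos q
    rw [hX]; nlinarith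
  refine ⟨min (M₁⁻¹ ^ (2:ℝ)) (X⁻¹ ^ (2/((d:ℝ)*ε))), ?_, ?_⟩
  · apply lt_min
    · exact Real.rpow_pos_of_pos (by positivity) _
    · exact Real.rpow_pos_of_pos (by positivity) _
  intro δ hδ hδ0 y E hy hgp hE hEm htube
  have hδa : δ ≤ M₁⁻¹ ^ (2:ℝ) := le_of_lt (lt_of_lt_of_le hδ0 (min_le_left _ _))
  have hδ2 : δ ≤ X⁻¹ ^ (2/((d:ℝ)*ε)) := le_of_lt (lt_of_lt_of_le hδ0 (min_le_right _ _))
  have hδ1 : δ ≤ 1 := by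
    refine hδa.trans ?_
    exact Real.rpow_le_one (by positivity) (by simp [inv_le_one_iff₀]; right; linarith) (by norm_num)
  -- the width and tube radius
  set w : ℝ := δ ^ (1 - ε) with hw
  have hw0 : 0 < w := Real.rpow_pos_of_pos hδ _
  have hy' : ∀ j, ‖y j‖ ≤ 1 := fun j => mem_closedBall_zero_iff.1 (hy j)
  obtain ⟨a, u, hu0, hgeo⟩ := geo hd c hc y hy' hgp w hw0
  set ρ : ℝ := M₁ * w with hρ
  have hρ1 : δ ≤ ρ := by
    have h1 : δ ^ (1:ℝ) ≤ δ ^ (1 - ε) :=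
      Real.rpow_le_rpow_of_exponent_ge hδ hδ1 (by linarith)
    rw [Real.rpow_one] at h1
    calc δ ≤ w := h1
    _ = 1 * w := (one_mul w).symm
    _ ≤ M₁ * w := by apply mul_le_mul_of_nonneg_right hM1 hw0.le
  have hρ2 : ρ ≤ 1 := by
    have h1 : w ≤ δ ^ ((1:ℝ)/2) :=
      Real.rpow_le_rpow_of_exponent_ge hδ hδ1 (by linarith)
    have h2 : δ ^ ((1:ℝ)/2) ≤ (M₁⁻¹ ^ (2:ℝ)) ^ ((1:ℝ)/2) :=
      Real.rpow_le_rpow hδ.le hδa (by norm_num)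
    have h3 : (M₁⁻¹ ^ (2:ℝ)) ^ ((1:ℝ)/2) = M₁⁻¹ := by
      rw [← Real.rpow_mul (by positivity)]
      norm_num
    have h4 : w ≤ M₁⁻¹ := by
      rw [← h3]; exact h1.trans h2
    calc ρ = M₁ * w := hρ
    _ ≤ M₁ * M₁⁻¹ := mul_le_mul_of_nonneg_left h4 hM1pos.le
    _ = 1 := mul_inv_cancel₀ hM1pos.ne'
  -- set inclusion
  have hsub : {x ∈ E | ∃ r : ℝ, 0 < r ∧ ∀ j, |dist x (y j) - r| ≤ δ ^ (1 - ε)}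
      ⊆ E ∩ Tube ρ a u := by
    rintro x ⟨hxE, hxr⟩
    refine ⟨hxE, ?_⟩
    have hx10 : ‖x‖ ≤ 10 := mem_closedBall_zero_iff.1 (hE hxE)
    have hmem := hgeo x hx10 hxr
    show infDist x (lineThrough a u) ≤ ρ
    calc infDist x (lineThrough a u) ≤ 52 * Dc (d-1) c * w := hmem
    _ ≤ M₁ * w := mul_le_mul_of_nonneg_right (le_max_right _ _) hw0.le
  calc volume {x ∈ E | ∃ r : ℝ, 0 < r ∧ ∀ j, |dist x (y j) - r| ≤ δ ^ (1 - ε)}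
      ≤ volume (E ∩ Tube ρ a u) := measure_mono hsub
  _ ≤ ENNReal.ofReal (C * δ ^ (((d : ℝ) - ε) / 2) * ρ ^ (((d : ℝ) - 1) / 2)) :=
      htube ρ hρ1 hρ2 a u hu0
  _ ≤ ENNReal.ofReal (δ ^ ((2 * (d : ℝ) - 1) / 2 - (d : ℝ) * ε)) := by
      apply ENNReal.ofReal_le_ofReal
      exact arith_core d hd C M₁ hC hM1 ε hε hε2 δ hδ hδ1 hδ2

end
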